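/- Let G be a finite simple graph on n vertices and let r = (n+1) − rank_{F_2} X(G) be the nullity over F_2 of the matrix X(G). Then ℓ(G) ≤ C(r+1, 2), where C(r+1,2) = (r+1)r/2 is the binomial coefficient. -/

import Mathlib

open Classical Finset

noncomputable section

/-- The mutation `μ_v(G)` of a graph `G` at a vertex `v`: edges not incident to `v`
are those of `G`; edges incident to `v` are the pairs `vw` with `w ≠ v`, `w ∉ N_G(v)`. -/
def mutation {V : Type*} (G : SimpleGraph V) (v : V) : SimpleGraph V where
  Adj x y := x ≠ y ∧
    ((x = v ∧ ¬ G.Adj v y) ∨ (y = v ∧ ¬ G.Adj v x) ∨ (x ≠ v ∧ y ≠ v ∧ G.Adj x y))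
  symm := by
    constructor
    rintro x y ⟨hxy, h | h | ⟨h1, h2, h3⟩⟩
    · exact ⟨hxy.symm, Or.inr (Or.inl h)⟩
    · exact ⟨hxy.symm, Or.inl h⟩
    · exact ⟨hxy.symm, Or.inr (Or.inr ⟨h2, h1, h3.symm⟩)⟩
  loopless := by
    constructor
    rintro x ⟨hxx, -⟩
    exact hxx rfl

/-- The relative mutation `μ_{v←u}(G)` of `G` at `v` with respect to `u`: edges not
incident to `v` are those of `G`; edges incident to `v` are the pairs `vw` with
`w ≠ v` and `w` in the symmetric difference `N_G(u) Δ N_G(v)`. -/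
def relMutation {V : Type*} (G : SimpleGraph V) (v u : V) : SimpleGraph V where
  Adj x y := x ≠ y ∧
    ((x = v ∧ (G.Adj u y ↔ ¬ G.Adj v y)) ∨ (y = v ∧ (G.Adj u x ↔ ¬ G.Adj v x)) ∨
      (x ≠ v ∧ y ≠ v ∧ G.Adj x y))
  symm := by
    constructor
    rintro x y ⟨hxy, h | h | ⟨h1, h2, h3⟩⟩
    · exact ⟨hxy.symm, Or.inr (Or.inl h)⟩
    · exact ⟨hxy.symm, Or.inl h⟩
    · exact ⟨hxy.symm, Or.inr (Or.inr ⟨h2, h1, h3.symm⟩)⟩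
  loopless := by
    constructor
    rintro x ⟨hxx, -⟩
    exact hxx rfl

/-- A vertex is isolated if it has no neighbors. -/
def isIsolated {V : Type*} (G : SimpleGraph V) (v : V) : Prop := ∀ w, ¬ G.Adj v w

/-- `pairGraph a b` is the graph `G(a,b)` on `2a+b` vertices consisting of `a`
pairwise disjoint edges `{0,1}, {2,3}, …` together with `b` isolated vertices. -/
def pairGraph (a b : ℕ) : SimpleGraph (Fin (2 * a + b)) where
  Adj x y := x ≠ y ∧ (x : ℕ) / 2 = (y : ℕ) / 2 ∧ (x : ℕ) < 2 * a
  symm := by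
    constructor
    rintro x y ⟨h1, h2, h3⟩
    exact ⟨h1.symm, h2.symm, by omega⟩
  loopless := by
    constructor
    rintro x ⟨hxx, -⟩
    exact hxx rfl

/-- The adjacency matrix `M(G)` of `G`, over `F_2`. -/
def adjMat {n : ℕ} (G : SimpleGraph (Fin n)) : Matrix (Fin n) (Fin n) (ZMod 2) :=
  fun i j => if G.Adj i j then 1 else 0

/-- The matrix `X(G)` over `F_2`: upper-left `n×n` block is `M(G)`, and the last row
and column consist entirely of `1`'s except for the `(n+1, n+1)` entry, which is `0`. -/
def Xmat {n : ℕ} (G : SimpleGraph (Fin n)) :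
    Matrix (Fin (n + 1)) (Fin (n + 1)) (ZMod 2) :=
  fun i j =>
    if hi : (i : ℕ) < n then
      if hj : (j : ℕ) < n then adjMat G ⟨i, hi⟩ ⟨j, hj⟩ else 1
    else if (j : ℕ) < n then 1 else 0

/-- Finite simple graphs on vertex sets `{1, …, n}`, bundled with `n`. -/
abbrev GraphOn := Σ n : ℕ, SimpleGraph (Fin n)

/-- One move: either pass to an isomorphic graph, or apply a mutation `μ_v`, or apply a
relative mutation `μ_{v←w}` to a graph containing an isolated vertex `u ∉ {v, w}`. -/
inductive MoveStep : GraphOn → GraphOn → Prop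
  | iso {n m : ℕ} (G : SimpleGraph (Fin n)) (H : SimpleGraph (Fin m)) :
      Nonempty (G ≃g H) → MoveStep ⟨n, G⟩ ⟨m, H⟩
  | mut {n : ℕ} (G : SimpleGraph (Fin n)) (v : Fin n) :
      MoveStep ⟨n, G⟩ ⟨n, mutation G v⟩
  | relMut {n : ℕ} (G : SimpleGraph (Fin n)) (v w u : Fin n) :
      v ≠ w → u ≠ v → u ≠ w → isIsolated G u →
      MoveStep ⟨n, G⟩ ⟨n, relMutation G v w⟩

/-- `G ≈ G'`: `G'` is obtained from `G`, up to graph isomorphism, by a finite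
sequence of mutations and relative mutations (the latter in the presence of an
isolated vertex distinct from the two vertices involved). -/
def graphEquiv (A B : GraphOn) : Prop := Relation.ReflTransGen MoveStep A B

/-- The induced subgraph of `G` on `{i, j, k}` has an even number of edges. -/
def evenTriple {V : Type*} (G : SimpleGraph V) (i j k : V) : Prop :=
  Even ((if G.Adj i j then 1 else 0) + (if G.Adj i k then 1 else 0) +
    (if G.Adj j k then 1 else 0) : ℕ)

/-- `ℓ(G)`: the number of 2-element subsets `{i, j}` (encoded as pairs `i < j`) such
that for every vertex `k ∉ {i, j}` the induced subgraph of `G` on `{i, j, k}` has an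
even number of edges. -/
def ell {n : ℕ} (G : SimpleGraph (Fin n)) : ℕ :=
  ((univ : Finset (Fin n × Fin n)).filter
    (fun p => p.1 < p.2 ∧ ∀ k, k ≠ p.1 → k ≠ p.2 → evenTriple G p.1 p.2 k)).card

/-- `J(G)`: the set of 2-element subsets `{i, j}` (encoded as pairs `i < j`) with
`N_G(i) = N_G(j) ≠ ∅`. -/
def Jfinset {n : ℕ} (G : SimpleGraph (Fin n)) : Finset (Fin n × Fin n) :=
  (univ : Finset (Fin n × Fin n)).filter
    (fun p => p.1 < p.2 ∧ G.neighborSet p.1 = G.neighborSet p.2 ∧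
      G.neighborSet p.1 ≠ ∅)

/-- `j(G) = #J(G)`. -/
def jnum {n : ℕ} (G : SimpleGraph (Fin n)) : ℕ := (Jfinset G).card

/-- `i(G)`: the number of isolated vertices of `G`. -/
def numIso {n : ℕ} (G : SimpleGraph (Fin n)) : ℕ :=
  ((univ : Finset (Fin n)).filter (fun v => isIsolated G v)).card


noncomputable section
namespace S19
variable {n : ℕ} (G : SimpleGraph (Fin n))

def aZ (i j : Fin n) : ZMod 2 := if G.Adj i j then 1 else 0

lemma aZ_comm (i j : Fin n) : aZ G i j = aZ G j i := by simp [aZ, SimpleGraph.adj_comm]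

lemma aZ_self (i : Fin n) : aZ G i i = 0 := by simp [aZ]

lemma evenTriple_iff (i j k : Fin n) :
    evenTriple G i j k ↔ aZ G i j + aZ G i k + aZ G j k = 0 := by
  unfold evenTriple aZ
  split_ifs <;> decide

def Good (i j : Fin n) : Prop := i ≠ j ∧ ∀ k, k ≠ i → k ≠ j → evenTriple G i j k

lemma good_symm {i j : Fin n} (h : Good G i j) : Good G j i := by
  refine ⟨h.1.symm, fun k hk1 hk2 => ?_⟩
  rw [evenTriple_iff]
  have := (evenTriple_iff G i j k).mp (h.2 k hk2 hk1)
  have c1 := aZ_comm G j i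
  linear_combination this + c1

lemma good_trans {a b c : Fin n} (hab : Good G a b) (hbc : Good G b c) (hac : a ≠ c) :
    Good G a c := by
  refine ⟨hac, fun m hma hmc => ?_⟩
  rw [evenTriple_iff]
  have h3 := (evenTriple_iff G a b c).mp (hab.2 c (Ne.symm hac) hbc.1.symm)
  by_cases hmb : m = b
  · subst hmb
    have c1 := aZ_comm G c m
    linear_combination h3 + c1
  · have h1 := (evenTriple_iff G a b m).mp (hab.2 m hma hmb)
    have h2 := (evenTriple_iff G b c m).mp (hbc.2 m hmb hmc)
    have two0 : (2 : ZMod 2) = 0 := by decide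
    linear_combination h1 + h2 + h3 - (aZ G a b + aZ G b m + aZ G b c) * two0

lemma X_cc (k i : Fin n) : Xmat G k.castSucc i.castSucc = aZ G k i := by
  have hk : ((k.castSucc : Fin (n+1)) : ℕ) < n := by simp
  have hi : ((i.castSucc : Fin (n+1)) : ℕ) < n := by simp
  rw [Xmat, dif_pos hk, dif_pos hi]
  congr 1

lemma X_cl (k : Fin n) : Xmat G k.castSucc (Fin.last n) = 1 := by
  have hk : ((k.castSucc : Fin (n+1)) : ℕ) < n := by simp
  rw [Xmat, dif_pos hk, dif_neg (by simp)]

lemma X_lc (i : Fin n) : Xmat G (Fin.last n) i.castSucc = 1 := by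
  rw [Xmat, dif_neg (by simp), if_pos (by simp)]

lemma X_ll : Xmat G (Fin.last n) (Fin.last n) = 0 := by
  rw [Xmat, dif_neg (by simp), if_neg (by simp)]

/-- the kernel vector attached to a pair `(i,j)` -/
def vvec (i j : Fin n) : Fin (n+1) → ZMod 2 := fun t =>
  (if t = i.castSucc then 1 else 0) + (if t = j.castSucc then 1 else 0) +
    (if t = Fin.last n then aZ G i j else 0)

lemma mulVec_vvec (i j : Fin n) (k : Fin (n+1)) :
    Matrix.mulVec (Xmat G) (vvec G i j) k
      = Xmat G k i.castSucc + Xmat G k j.castSucc + Xmat G k (Fin.last n) * aZ G i j := by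
  simp [Matrix.mulVec, dotProduct, vvec, mul_add, Finset.sum_add_distrib,
    mul_ite, Finset.sum_ite_eq', mul_comm]

lemma vvec_ker {i j : Fin n} (hGood : Good G i j) :
    Matrix.mulVec (Xmat G) (vvec G i j) = 0 := by
  have two0 : (2 : ZMod 2) = 0 := by decide
  funext k
  rw [Pi.zero_apply, mulVec_vvec]
  induction k using Fin.lastCases with
  | last =>
    rw [X_lc, X_lc, X_ll, zero_mul, add_zero]
    decide
  | cast m =>
    rw [X_cc, X_cc, X_cl, one_mul]
    show aZ G m i + aZ G m j + aZ G i j = 0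
    by_cases hmi : m = i
    · subst hmi
      rw [aZ_self, zero_add, aZ_comm G m j]
      linear_combination (aZ G j m) * two0
    · by_cases hmj : m = j
      · subst hmj
        rw [aZ_self, add_zero, aZ_comm G m i]
        linear_combination (aZ G i m) * two0
      · have h := (evenTriple_iff G i j m).mp (hGood.2 m hmi hmj)
        linear_combination h + aZ_comm G m i + aZ_comm G m j

/-- vertices that are `Good` with some smaller vertex -/
def TT : Finset (Fin n) := univ.filter (fun j => ∃ i, i < j ∧ Good G i j)

lemma mem_TT {j : Fin n} : j ∈ TT G ↔ ∃ i, i < j ∧ Good G i j := by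
  simp [TT]

/-- a chosen smaller good partner -/
def wit (j : Fin n) : Fin n :=
  if h : ∃ i, i < j ∧ Good G i j then h.choose else j

lemma wit_spec {j : Fin n} (h : j ∈ TT G) : wit G j < j ∧ Good G (wit G j) j := by
  rw [mem_TT] at h
  rw [wit, dif_pos h]
  exact h.choose_spec

lemma uniq_notT {i1 i2 j : Fin n} (h1 : Good G i1 j) (h2 : Good G i2 j)
    (l1 : i1 < j) (l2 : i2 < j) (m1 : i1 ∉ TT G) (m2 : i2 ∉ TT G) : i1 = i2 := by
  by_contra hne
  rcases lt_or_gt_of_ne hne with h | h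
  · exact m2 ((mem_TT G).mpr ⟨i1, h, good_trans G h1 (good_symm G h2) hne⟩)
  · exact m1 ((mem_TT G).mpr ⟨i2, h, good_trans G h2 (good_symm G h1) (Ne.symm hne)⟩)

lemma vvec_castSucc (i j t : Fin n) :
    vvec G i j t.castSucc = (if t = i then 1 else 0) + (if t = j then 1 else 0) := by
  simp only [vvec, Fin.castSucc_inj, if_neg (Fin.castSucc_lt_last t).ne, add_zero]

/-- the family of kernel vectors indexed by `TT` is linearly independent -/
lemma indep : LinearIndependent (ZMod 2)
    (fun j : {x // x ∈ TT G} => vvec G (wit G (j : Fin n)) (j : Fin n)) := by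
  rw [Fintype.linearIndependent_iff]
  intro g hg
  by_contra hne
  push_neg at hne
  set s : Finset {x // x ∈ TT G} := univ.filter (fun j => g j ≠ 0) with hs
  have hsne : s.Nonempty := by
    obtain ⟨j, hj⟩ := hne
    exact ⟨j, by simp [hs, hj]⟩
  set j0 := s.max' hsne with hj0
  have hg0 : g j0 ≠ 0 := by
    have h := s.max'_mem hsne
    rw [← hj0] at h
    exact (Finset.mem_filter.mp h).2
  have key := congrFun hg ((j0 : Fin n).castSucc)
  simp only [Finset.sum_apply, Pi.zero_apply] at key
  have hterm : ∀ b : {x // x ∈ TT G}, b ≠ j0 →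
      (g b • vvec G (wit G (b : Fin n)) (b : Fin n)) ((j0 : Fin n).castSucc) = 0 := by
    intro b hb
    by_cases hzero : g b = 0
    · rw [Pi.smul_apply, hzero, zero_smul]
    · have hbs : b ∈ s := by simp [hs, hzero]
      have hble : b ≤ j0 := s.le_max' b hbs
      have hblt : (b : Fin n) < (j0 : Fin n) :=
        lt_of_le_of_ne hble (Subtype.val_injective.ne hb)
      have hw := (wit_spec G b.2).1
      rw [Pi.smul_apply, vvec_castSucc]
      rw [if_neg (by
          intro hEq
          rw [← hEq] at hw
          exact absurd (hw.trans hblt) (lt_irrefl _)),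
        if_neg (ne_of_gt hblt), add_zero, smul_zero]
  have hj0v : (g j0 • vvec G (wit G (j0 : Fin n)) (j0 : Fin n)) ((j0 : Fin n).castSucc)
      = g j0 := by
    have hw := (wit_spec G j0.2).1
    rw [Pi.smul_apply, vvec_castSucc, if_neg (ne_of_gt hw), if_pos rfl, zero_add, smul_eq_mul,
      mul_one]
  have hsum : ∑ c : {x // x ∈ TT G},
      (g c • vvec G (wit G (c : Fin n)) (c : Fin n)) ((j0 : Fin n).castSucc) = g j0 := by
    rw [Finset.sum_eq_single_of_mem j0 (mem_univ _) (fun b _ hb => hterm b hb)]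
    exact hj0v
  rw [hsum] at key
  exact hg0 key

/-- `#TT ≤ nullity of X` -/
lemma card_TT_le : (TT G).card + (Xmat G).rank ≤ n + 1 := by
  classical
  set L := (Xmat G).mulVecLin with hL
  have hker : ∀ j : {x // x ∈ TT G},
      vvec G (wit G (j : Fin n)) (j : Fin n) ∈ LinearMap.ker L := by
    intro j
    rw [LinearMap.mem_ker, hL, Matrix.mulVecLin_apply]
    exact vvec_ker G (wit_spec G j.2).2
  have hindep : LinearIndependent (ZMod 2)
      (fun j : {x // x ∈ TT G} =>
        (⟨vvec G (wit G (j : Fin n)) (j : Fin n), hker j⟩ : LinearMap.ker L)) := by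
    apply LinearIndependent.of_comp (LinearMap.ker L).subtype
    exact indep G
  have hcard := hindep.fintype_card_le_finrank
  rw [Fintype.card_coe] at hcard
  have hrn := LinearMap.finrank_range_add_finrank_ker L
  rw [Module.finrank_fin_fun] at hrn
  have hrank : (Xmat G).rank = Module.finrank (ZMod 2) (LinearMap.range L) := rfl
  omega

end S19
end

end


/-- if `r = (n+1) − rank_{F_2} X(G)` is the nullity of `X(G)`, then
`ℓ(G) ≤ C(r+1, 2)`. -/
theorem stmt_19 {n : ℕ} (G : SimpleGraph (Fin n)) (r : ℕ)
    (hr : (r : ℤ) = (n + 1 : ℤ) - ((Xmat G).rank : ℤ)) :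
    ell G ≤ Nat.choose (r + 1) 2 := by
  classical
  set m := (S19.TT G).card with hm
  -- the target finset: 2-element subsets of `TT' ∪ {last}`
  set s' : Finset (Fin (n+1)) :=
    (S19.TT G).image Fin.castSucc ∪ {Fin.last n} with hs'
  have hlast_not : Fin.last n ∉ (S19.TT G).image Fin.castSucc := by
    intro h
    obtain ⟨x, -, hx⟩ := Finset.mem_image.mp h
    exact (Fin.castSucc_lt_last x).ne hx
  have hcard_s' : s'.card = m + 1 := by
    rw [hs', Finset.card_union_of_disjoint (by
      simp only [Finset.disjoint_singleton_right]; exact hlast_not)]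
    rw [Finset.card_image_of_injective _ (Fin.castSucc_injective n), Finset.card_singleton]
  -- the injection
  set f : Fin n × Fin n → Finset (Fin (n+1)) := fun p =>
    {(if p.1 ∈ S19.TT G then p.1.castSucc else Fin.last n), p.2.castSucc} with hf
  set SS := ((univ : Finset (Fin n × Fin n)).filter
    (fun p => p.1 < p.2 ∧ ∀ k, k ≠ p.1 → k ≠ p.2 → evenTriple G p.1 p.2 k)) with hSS
  have hmemSS : ∀ p ∈ SS, p.1 < p.2 ∧ S19.Good G p.1 p.2 := by
    intro p hp
    have := (Finset.mem_filter.mp hp).2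
    exact ⟨this.1, this.1.ne, this.2⟩
  have hT2 : ∀ p ∈ SS, p.2 ∈ S19.TT G := by
    intro p hp
    obtain ⟨h1, h2⟩ := hmemSS p hp
    exact (S19.mem_TT G).mpr ⟨p.1, h1, h2⟩
  have hne_f : ∀ p ∈ SS, (if p.1 ∈ S19.TT G then p.1.castSucc else Fin.last n)
      ≠ p.2.castSucc := by
    intro p hp
    obtain ⟨h1, -⟩ := hmemSS p hp
    split_ifs
    · exact fun h => (h1.ne) (Fin.castSucc_injective n h)
    · exact fun h => (Fin.castSucc_lt_last p.2).ne h.symm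
  have hmaps : ∀ p ∈ SS, f p ∈ s'.powersetCard 2 := by
    intro p hp
    rw [Finset.mem_powersetCard]
    constructor
    · rw [hf]
      apply Finset.insert_subset
      · split_ifs with h
        · exact Finset.mem_union_left _ (Finset.mem_image_of_mem _ h)
        · exact Finset.mem_union_right _ (Finset.mem_singleton_self _)
      · intro x hx
        rw [Finset.mem_singleton] at hx
        subst hx
        exact Finset.mem_union_left _ (Finset.mem_image_of_mem _ (hT2 p hp))
    · exact Finset.card_pair (hne_f p hp)
  have hinj : Set.InjOn f SS := by
    intro p hp q hq hfeq
    obtain ⟨hp1, hpG⟩ := hmemSS p hp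
    obtain ⟨hq1, hqG⟩ := hmemSS q hq
    simp only [hf] at hfeq
    have hp2q : p.2.castSucc ∈ ({(if q.1 ∈ S19.TT G then q.1.castSucc else Fin.last n),
        q.2.castSucc} : Finset (Fin (n+1))) := by
      rw [← hfeq]
      exact Finset.mem_insert_of_mem (Finset.mem_singleton_self _)
    rw [Finset.mem_insert, Finset.mem_singleton] at hp2q
    rcases hp2q with hB | hA
    · -- p.2.castSucc = xq : contradiction
      exfalso
      by_cases hq1T : q.1 ∈ S19.TT G
      · rw [if_pos hq1T] at hB
        have hp2q1 : p.2 = q.1 := Fin.castSucc_injective n hB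
        -- now locate q.2.castSucc in f p
        have hq2p : q.2.castSucc ∈ ({(if p.1 ∈ S19.TT G then p.1.castSucc else Fin.last n),
            p.2.castSucc} : Finset (Fin (n+1))) := by
          rw [hfeq]
          exact Finset.mem_insert_of_mem (Finset.mem_singleton_self _)
        rw [Finset.mem_insert, Finset.mem_singleton] at hq2p
        rcases hq2p with hB' | hA'
        · by_cases hp1T : p.1 ∈ S19.TT G
          · rw [if_pos hp1T] at hB'
            have hq2p1 : q.2 = p.1 := Fin.castSucc_injective n hB'
            rw [hp2q1] at hp1
            rw [hq2p1] at hq1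
            exact absurd (hp1.trans hq1) (lt_irrefl _)
          · rw [if_neg hp1T] at hB'
            exact (Fin.castSucc_lt_last q.2).ne hB'
        · have hqp : q.2 = p.2 := Fin.castSucc_injective n hA'
          rw [hqp, hp2q1] at hq1
          exact absurd hq1 (lt_irrefl _)
      · rw [if_neg hq1T] at hB
        exact (Fin.castSucc_lt_last p.2).ne hB
    · -- p.2 = q.2
      have h22 : p.2 = q.2 := Fin.castSucc_injective n hA
      -- show p.1 = q.1
      have hxp : (if p.1 ∈ S19.TT G then p.1.castSucc else Fin.last n)
          ∈ ({(if q.1 ∈ S19.TT G then q.1.castSucc else Fin.last n),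
            q.2.castSucc} : Finset (Fin (n+1))) := by
        rw [← hfeq]
        exact Finset.mem_insert_self _ _
      rw [Finset.mem_insert, Finset.mem_singleton] at hxp
      rcases hxp with hxx | hx2
      · by_cases hp1T : p.1 ∈ S19.TT G
        · rw [if_pos hp1T] at hxx
          by_cases hq1T : q.1 ∈ S19.TT G
          · rw [if_pos hq1T] at hxx
            exact Prod.ext (Fin.castSucc_injective n hxx) h22
          · rw [if_neg hq1T] at hxx
            exact absurd hxx (Fin.castSucc_lt_last p.1).ne
        · rw [if_neg hp1T] at hxx
          by_cases hq1T : q.1 ∈ S19.TT G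
          · rw [if_pos hq1T] at hxx
            exact absurd hxx.symm (Fin.castSucc_lt_last q.1).ne
          · rw [if_neg hq1T] at hxx
            have h11 : p.1 = q.1 := by
              apply S19.uniq_notT G hpG (h22 ▸ hqG) hp1 (h22 ▸ hq1) hp1T hq1T
            exact Prod.ext h11 h22
      · exfalso
        by_cases hp1T : p.1 ∈ S19.TT G
        · rw [if_pos hp1T] at hx2
          have : p.1 = q.2 := Fin.castSucc_injective n hx2
          rw [this, ← h22] at hp1
          exact absurd hp1 (lt_irrefl _)
        · rw [if_neg hp1T] at hx2
          exact (Fin.castSucc_lt_last q.2).ne hx2.symm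
    -- end hinj
  have hell : ell G = SS.card := rfl
  have hle1 : ell G ≤ (s'.powersetCard 2).card :=
    hell ▸ Finset.card_le_card_of_injOn f hmaps hinj
  rw [Finset.card_powersetCard, hcard_s'] at hle1
  -- m ≤ r
  have hTle := S19.card_TT_le G
  have hmr : m ≤ r := by
    have h2 : (m : ℤ) + ((Xmat G).rank : ℤ) ≤ (n : ℤ) + 1 := by exact_mod_cast hTle
    have : (m : ℤ) ≤ (r : ℤ) := by omega
    exact_mod_cast this
  exact hle1.trans (Nat.choose_le_choose 2 (by omega))
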